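/- For every F ∈ L²([−π, π]) and f(z) = (1/2π) ∫_{−π}^{π} F(t) e^{−izt} dt, one has lim_{|y| → ∞} sup_{x ∈ ℝ} |f(x + iy)| / √((e^{2πy} − e^{−2πy})/(4πy)) = 0; that is, the decay of |f(z)|/√(K(z, z̄)) as |Im z| → ∞ is uniform in Re z. -/

import Mathlib

open MeasureTheory

/-- The Paley–Wiener transform `f(z) = (1/2π) ∫_{−π}^{π} F(t) e^{−izt} dt`. -/
noncomputable def pwTransform (F : ℝ → ℂ) (z : ℂ) : ℂ :=
  (1 / (2 * Real.pi) : ℝ) •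
    ∫ t in Set.Icc (-Real.pi) Real.pi, F t * Complex.exp (-Complex.I * z * t)

/-- The diagonal of the Paley–Wiener reproducing kernel:
`K(z, z̄) = (e^{2πy} − e^{−2πy})/(4πy)` for `z = x + iy`, interpreted as `1` when `y = 0`. -/
noncomputable def pwKernelDiag (y : ℝ) : ℝ :=
  if y = 0 then 1
  else (Real.exp (2 * Real.pi * y) - Real.exp (-(2 * Real.pi * y))) / (4 * Real.pi * y)

open Real Filter Topology

lemma pwK_pos (y : ℝ) : 0 < pwKernelDiag y := by
  unfold pwKernelDiag
  split_ifs with h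
  · norm_num
  · rcases lt_or_gt_of_ne h with hy | hy
    · apply div_pos_of_neg_of_neg
      · have : 2 * Real.pi * y < -(2 * Real.pi * y) := by nlinarith [Real.pi_pos]
        nlinarith [Real.exp_lt_exp.2 this]
      · nlinarith [Real.pi_pos]
    · apply div_pos
      · have : -(2 * Real.pi * y) < 2 * Real.pi * y := by nlinarith [Real.pi_pos]
        nlinarith [Real.exp_lt_exp.2 this]
      · nlinarith [Real.pi_pos]

lemma pwK_neg (y : ℝ) : pwKernelDiag (-y) = pwKernelDiag y := by
  unfold pwKernelDiag
  split_ifs with h1 h2 h2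
  · rfl
  · exact absurd (neg_eq_zero.1 h1) h2
  · exact absurd (neg_eq_zero.2 h2) h1
  · rw [show 2 * Real.pi * -y = -(2 * Real.pi * y) by ring, neg_neg]
    rw [show (4:ℝ) * Real.pi * -y = -(4 * Real.pi * y) by ring]
    field_simp
    ring

lemma pwK_abs (y : ℝ) : pwKernelDiag |y| = pwKernelDiag y := by
  rcases abs_cases y with ⟨h, _⟩ | ⟨h, _⟩
  · rw [h]
  · rw [h, pwK_neg]

lemma pwK_lower {u : ℝ} (hu : 1 ≤ u) :
    Real.exp (2 * Real.pi * u) * (1 - Real.exp (-(4 * Real.pi))) / (4 * Real.pi * u)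
      ≤ pwKernelDiag u := by
  have hu0 : 0 < u := lt_of_lt_of_le one_pos hu
  unfold pwKernelDiag
  rw [if_neg hu0.ne']
  gcongr
  have h1 : Real.exp (-(2 * Real.pi * u)) ≤ Real.exp (2 * Real.pi * u - 4 * Real.pi) :=
    Real.exp_le_exp.2 (by nlinarith [Real.pi_pos])
  have h2 : Real.exp (2 * Real.pi * u - 4 * Real.pi)
      = Real.exp (2 * Real.pi * u) * Real.exp (-(4 * Real.pi)) := by
    rw [← Real.exp_add]; ring_nf
  nlinarith

lemma pwK_exp_tendsto {d : ℝ} (hd : 0 < d) :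
    Tendsto (fun u => Real.exp ((Real.pi - d) * u) / Real.sqrt (pwKernelDiag u))
      atTop (𝓝 0) := by
  have hc : Real.exp (-(4 * Real.pi)) < 1 := by
    rw [Real.exp_lt_one_iff]; nlinarith [Real.pi_pos]
  have hc' : 0 < 1 - Real.exp (-(4 * Real.pi)) := by linarith
  have hr : Tendsto (fun u => Real.exp (2 * ((Real.pi - d) * u)) / pwKernelDiag u)
      atTop (𝓝 0) := by
    apply squeeze_zero' (Filter.Eventually.of_forall fun u => div_nonneg (Real.exp_nonneg _) (pwK_pos u).le)
      (g := fun u => 4 * Real.pi / (1 - Real.exp (-(4 * Real.pi)))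
        * (u ^ (1:ℝ) * Real.exp (-(2 * d) * u)))
    · filter_upwards [eventually_ge_atTop (1:ℝ)] with u hu
      have hu0 : 0 < u := lt_of_lt_of_le one_pos hu
      have hK := pwK_lower hu
      have hL : 0 < Real.exp (2 * Real.pi * u) * (1 - Real.exp (-(4 * Real.pi)))
          / (4 * Real.pi * u) := by positivity
      have h1 : Real.exp (2 * ((Real.pi - d) * u)) / pwKernelDiag u
          ≤ Real.exp (2 * ((Real.pi - d) * u)) /
            (Real.exp (2 * Real.pi * u) * (1 - Real.exp (-(4 * Real.pi)))
              / (4 * Real.pi * u)) := by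
        gcongr
      refine h1.trans_eq ?_
      have hsplit : Real.exp (2 * Real.pi * u)
          = Real.exp (2 * ((Real.pi - d) * u)) * Real.exp (2 * d * u) := by
        rw [← Real.exp_add]; ring_nf
      have hexpneg : Real.exp (-(2 * d) * u) = (Real.exp (2 * d * u))⁻¹ := by
        rw [← Real.exp_neg]; ring_nf
      rw [Real.rpow_one, hsplit, hexpneg]
      have e1 : Real.exp (2 * ((Real.pi - d) * u)) ≠ 0 := (Real.exp_pos _).ne'
      have e2 : Real.exp (2 * d * u) ≠ 0 := (Real.exp_pos _).ne'
      field_simp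
    · have := (tendsto_rpow_mul_exp_neg_mul_atTop_nhds_zero 1 (2*d) (by positivity)).const_mul
        (4 * Real.pi / (1 - Real.exp (-(4 * Real.pi))))
      simpa using this
  have heq : (fun u => Real.exp ((Real.pi - d) * u) / Real.sqrt (pwKernelDiag u))
      = fun u => Real.sqrt (Real.exp (2 * ((Real.pi - d) * u)) / pwKernelDiag u) := by
    funext u
    rw [Real.sqrt_div (Real.exp_nonneg _),
      show 2 * ((Real.pi - d) * u) = (Real.pi - d) * u + (Real.pi - d) * u by ring,
      Real.exp_add, Real.sqrt_mul_self (Real.exp_nonneg _)]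
  rw [heq]
  simpa using hr.sqrt

lemma pwK_integral (y : ℝ) :
    ∫ t in Set.Icc (-Real.pi) Real.pi, Real.exp (2 * y * t)
      = 2 * Real.pi * pwKernelDiag y := by
  have hle : -Real.pi ≤ Real.pi := by nlinarith [Real.pi_pos]
  rw [MeasureTheory.integral_Icc_eq_integral_Ioc,
    ← intervalIntegral.integral_of_le hle]
  unfold pwKernelDiag
  split_ifs with h
  · simp [h]
    nlinarith [Real.pi_pos]
  · have h2 : (2 * y) ≠ 0 := by simpa using h
    rw [show (fun t => Real.exp (2 * y * t)) = fun t => Real.exp (2 * y * t) from rfl]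
    rw [intervalIntegral.integral_comp_mul_left (fun t => Real.exp t) h2]
    rw [integral_exp]
    rw [smul_eq_mul]
    have : 2 * y * Real.pi = 2 * Real.pi * y := by ring
    rw [this, show 2 * y * -Real.pi = -(2 * Real.pi * y) by ring]
    field_simp
    ring

lemma pw_abs_le (F : ℝ → ℂ) (x y : ℝ) :
    ‖pwTransform F (x + y * Complex.I)‖
      ≤ (1 / (2 * Real.pi)) *
        ∫ t in Set.Icc (-Real.pi) Real.pi, ‖F t‖ * Real.exp (y * t) := by
  unfold pwTransform
  rw [norm_smul, Real.norm_eq_abs, abs_of_nonneg (by positivity : (0:ℝ) ≤ 1 / (2 * Real.pi))]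
  gcongr
  refine (norm_integral_le_integral_norm _).trans ?_
  apply le_of_eq
  apply integral_congr_ae
  filter_upwards with t
  rw [norm_mul, Complex.norm_exp]
  congr 1
  congr 1
  simp [Complex.mul_re]

lemma exp_memL2 (y : ℝ) :
    MemLp (fun t : ℝ => Real.exp (y * t)) 2
      (volume.restrict (Set.Icc (-Real.pi) Real.pi)) := by
  have hcont : Continuous fun t : ℝ => Real.exp (y * t) := by continuity
  rw [memLp_two_iff_integrable_sq hcont.aestronglyMeasurable]
  exact (hcont.pow 2).integrableOn_Icc

lemma mul_integrable {G g : ℝ → ℝ} {μ : Measure ℝ}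
    (hG : MemLp G 2 μ) (hg : MemLp g 2 μ) :
    Integrable (fun t => G t * g t) μ := by
  rw [← memLp_one_iff_integrable]
  have := hg.smul (𝕜 := ℝ) hG (r := 1)
    (hpqr := ⟨by rw [ENNReal.inv_two_add_inv_two, inv_one]⟩)
  exact this

lemma holder_tail {F : ℝ → ℂ}
    (hF : MemLp F 2 (volume.restrict (Set.Icc (-Real.pi) Real.pi)))
    {S : Set ℝ} (hS : MeasurableSet S) (hSsub : S ⊆ Set.Icc (-Real.pi) Real.pi) (y : ℝ) :
    ∫ t in S, ‖F t‖ * Real.exp (y * t)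
      ≤ Real.sqrt (∫ t in S, ‖F t‖ ^ 2) * Real.sqrt (∫ t in S, Real.exp (y * t) ^ 2) := by
  have hres : (volume.restrict (Set.Icc (-Real.pi) Real.pi)).restrict S = volume.restrict S := by
    rw [Measure.restrict_restrict hS, Set.inter_eq_self_of_subset_left hSsub]
  have hFm : MemLp (fun t => ‖F t‖) 2 (volume.restrict S) := by
    have := hF.norm.restrict S; rwa [hres] at this
  have hgm : MemLp (fun t => Real.exp (y * t)) 2 (volume.restrict S) := by
    have := (exp_memL2 y).restrict S; rwa [hres] at this
  have h2 : (ENNReal.ofReal (2:ℝ)) = 2 := by norm_num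
  have key := integral_mul_le_Lp_mul_Lq_of_nonneg (μ := volume.restrict S)
    (Real.holderConjugate_iff.mpr ⟨one_lt_two, by norm_num⟩)
    (Filter.Eventually.of_forall fun t => norm_nonneg (F t))
    (Filter.Eventually.of_forall fun t => (Real.exp_pos (y * t)).le)
    (h2 ▸ hFm) (h2 ▸ hgm)
  have e1 : (∫ t in S, ‖F t‖ ^ (2:ℝ)) = ∫ t in S, ‖F t‖ ^ 2 :=
    integral_congr_ae (Filter.Eventually.of_forall fun t => Real.rpow_two _)
  have e2 : (∫ t in S, Real.exp (y * t) ^ (2:ℝ)) = ∫ t in S, Real.exp (y * t) ^ 2 :=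
    integral_congr_ae (Filter.Eventually.of_forall fun t => Real.rpow_two _)
  rw [e1, e2, ← Real.sqrt_eq_rpow, ← Real.sqrt_eq_rpow] at key
  exact key

lemma tail_small {F : ℝ → ℂ}
    (hF : MemLp F 2 (volume.restrict (Set.Icc (-Real.pi) Real.pi)))
    {ε' : ℝ} (hε' : 0 < ε') :
    ∃ δ : ℝ, 0 < δ ∧ δ < Real.pi / 2 ∧
      (∫ t in Set.Icc (-Real.pi) Real.pi \ Set.Icc (-(Real.pi - δ)) (Real.pi - δ),
        ‖F t‖ ^ 2) < ε' := by
  set μI := volume.restrict (Set.Icc (-Real.pi) Real.pi) with hμI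
  set T : ℝ → Set ℝ := fun δ =>
    Set.Icc (-Real.pi) Real.pi \ Set.Icc (-(Real.pi - δ)) (Real.pi - δ) with hT
  have hTm : ∀ δ, MeasurableSet (T δ) := fun δ => measurableSet_Icc.diff measurableSet_Icc
  have hTsub : ∀ δ, T δ ⊆ Set.Icc (-Real.pi) Real.pi := fun δ => Set.diff_subset
  have hsq : Integrable (fun t => ‖F t‖ ^ 2) μI := hF.norm.integrable_sq
  have hμT : Tendsto (fun δ => μI (T δ)) (𝓝[>] (0:ℝ)) (𝓝 0) := by
    have hup : ∀ δ : ℝ, μI (T δ) ≤ ENNReal.ofReal δ + ENNReal.ofReal δ := by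
      intro δ
      have hsub : T δ ⊆ Set.Icc (-Real.pi) (-Real.pi + δ) ∪ Set.Icc (Real.pi - δ) Real.pi := by
        rintro t ⟨⟨h1, h2⟩, h3⟩
        rw [Set.mem_Icc] at h3
        push_neg at h3
        rcases lt_or_ge t (-(Real.pi - δ)) with h | h
        · exact Or.inl ⟨h1, by linarith⟩
        · exact Or.inr ⟨by linarith [h3 h], h2⟩
      calc μI (T δ) ≤ volume (T δ) := Measure.restrict_le_self _
      _ ≤ volume (Set.Icc (-Real.pi) (-Real.pi + δ) ∪ Set.Icc (Real.pi - δ) Real.pi) :=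
          measure_mono hsub
      _ ≤ volume (Set.Icc (-Real.pi) (-Real.pi + δ)) + volume (Set.Icc (Real.pi - δ) Real.pi) :=
          measure_union_le _ _
      _ = ENNReal.ofReal δ + ENNReal.ofReal δ := by
          rw [Real.volume_Icc, Real.volume_Icc]
          norm_num
    have h0 : Tendsto (fun δ : ℝ => ENNReal.ofReal δ + ENNReal.ofReal δ)
        (𝓝[>] (0:ℝ)) (𝓝 0) := by
      have h1 : Tendsto (fun δ : ℝ => ENNReal.ofReal δ) (𝓝[>] (0:ℝ)) (𝓝 0) := by
        have h2 : Tendsto (fun δ : ℝ => δ) (𝓝[>] (0:ℝ)) (𝓝 0) :=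
          Filter.tendsto_id.mono_left nhdsWithin_le_nhds
        have := (ENNReal.continuous_ofReal.tendsto 0).comp h2
        simpa [Function.comp_def] using this
      simpa using h1.add h1
    exact tendsto_of_tendsto_of_tendsto_of_le_of_le tendsto_const_nhds h0
      (fun δ => zero_le) hup
  have hint := hsq.tendsto_setIntegral_nhds_zero hμT
  have hev1 : ∀ᶠ δ in 𝓝[>] (0:ℝ), |∫ t in T δ, ‖F t‖ ^ 2 ∂μI| < ε' := by
    have := Metric.tendsto_nhds.mp hint ε' hε'
    filter_upwards [this] with δ hδ
    simpa [Real.dist_eq] using hδ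
  have hev2 : ∀ᶠ δ in 𝓝[>] (0:ℝ), δ ∈ Set.Ioo (0:ℝ) (Real.pi / 2) :=
    Ioo_mem_nhdsGT_of_mem ⟨le_refl _, by positivity⟩
  obtain ⟨δ, h1, h2⟩ := (hev1.and hev2).exists
  refine ⟨δ, h2.1, h2.2, ?_⟩
  have hres : μI.restrict (T δ) = volume.restrict (T δ) := by
    rw [hμI, Measure.restrict_restrict (hTm δ), Set.inter_eq_self_of_subset_left (hTsub δ)]
  have : (∫ t in T δ, ‖F t‖ ^ 2 ∂μI) = ∫ t in T δ, ‖F t‖ ^ 2 := by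
    rw [show (∫ t in T δ, ‖F t‖ ^ 2 ∂μI) = ∫ t, ‖F t‖ ^ 2 ∂(μI.restrict (T δ)) from rfl, hres]
  calc (∫ t in T δ, ‖F t‖ ^ 2) = ∫ t in T δ, ‖F t‖ ^ 2 ∂μI := this.symm
  _ ≤ |∫ t in T δ, ‖F t‖ ^ 2 ∂μI| := le_abs_self _
  _ < ε' := h1

set_option maxHeartbeats 1000000 in
/-- **Uniform vanishing of `|f|/√K` as `|Im z| → ∞` in the Paley–Wiener space `W(π)`.**
For every `F ∈ L²([−π, π])` and `f(z) = (1/2π)∫_{−π}^{π} F(t)e^{−izt} dt`,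
`sup_{x ∈ ℝ} |f(x + iy)| / √((e^{2πy} − e^{−2πy})/(4πy)) → 0` as `|y| → ∞`: the decay of
`|f(z)|/√(K(z, z̄))` as `|Im z| → ∞` is uniform in `Re z`. -/
theorem stmt13 (F : ℝ → ℂ)
    (hF : MemLp F 2 (volume.restrict (Set.Icc (-Real.pi) Real.pi))) :
    Filter.Tendsto
      (fun y : ℝ =>
        (⨆ x : ℝ, ‖pwTransform F (x + y * Complex.I)‖) /
          Real.sqrt (pwKernelDiag y))
      (Filter.comap (fun y : ℝ => |y|) Filter.atTop) (nhds 0) := by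
  have hπ : 0 < Real.pi := Real.pi_pos
  set g : ℝ → ℝ := fun y =>
    (1 / (2 * Real.pi)) * ∫ t in Set.Icc (-Real.pi) Real.pi, ‖F t‖ * Real.exp (y * t)
    with hg
  have hprod : ∀ y : ℝ, IntegrableOn (fun t => ‖F t‖ * Real.exp (y * t))
      (Set.Icc (-Real.pi) Real.pi) volume :=
    fun y => mul_integrable hF.norm (exp_memL2 y)
  have hφint : IntegrableOn (fun t => ‖F t‖) (Set.Icc (-Real.pi) Real.pi) volume :=
    hF.norm.integrable one_le_two
  have hgnn : ∀ y, 0 ≤ g y := fun y => by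
    apply mul_nonneg (by positivity)
    exact setIntegral_nonneg measurableSet_Icc
      (fun t _ => mul_nonneg (norm_nonneg _) (Real.exp_nonneg _))
  apply squeeze_zero (g := fun y => g y / Real.sqrt (pwKernelDiag y))
  · intro y
    apply div_nonneg _ (Real.sqrt_nonneg _)
    exact Real.iSup_nonneg fun x => norm_nonneg _
  · intro y
    gcongr
    exact ciSup_le fun x => pw_abs_le F x y
  rw [Metric.tendsto_nhds]
  intro ε hε
  simp_rw [Real.dist_eq, sub_zero]
  obtain ⟨δ, hδ0, hδπ, hδtail⟩ := tail_small hF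
    (ε' := 2 * Real.pi * (ε / 2) ^ 2) (by positivity)
  have hπδ : 0 < Real.pi - δ := by linarith
  set S' : Set ℝ := Set.Icc (-(Real.pi - δ)) (Real.pi - δ) with hS'
  set T : Set ℝ := Set.Icc (-Real.pi) Real.pi \ S' with hTdef
  have hS'sub : S' ⊆ Set.Icc (-Real.pi) Real.pi :=
    Set.Icc_subset_Icc (by linarith) (by linarith)
  set Cφ : ℝ := ∫ t in Set.Icc (-Real.pi) Real.pi, ‖F t‖ with hCφ
  have hCφnn : 0 ≤ Cφ :=
    setIntegral_nonneg measurableSet_Icc fun t _ => norm_nonneg _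
  have hev : ∀ᶠ u in atTop,
      Cφ / (2 * Real.pi) * (Real.exp ((Real.pi - δ) * u) / Real.sqrt (pwKernelDiag u))
        < ε / 2 := by
    have h1 := (pwK_exp_tendsto hδ0).const_mul (Cφ / (2 * Real.pi))
    rw [mul_zero] at h1
    have h2 := Metric.tendsto_nhds.mp h1 (ε / 2) (by positivity)
    filter_upwards [h2] with u hu
    rw [Real.dist_eq, sub_zero] at hu
    exact (le_abs_self _).trans_lt hu
  rw [Filter.eventually_comap]
  filter_upwards [hev] with u hu y hy
  have hKpos : 0 < pwKernelDiag y := pwK_pos y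
  have hsK : 0 < Real.sqrt (pwKernelDiag y) := Real.sqrt_pos.2 hKpos
  have hKu : pwKernelDiag u = pwKernelDiag y := by rw [← hy, pwK_abs]
  rw [abs_of_nonneg (div_nonneg (hgnn y) (Real.sqrt_nonneg _))]
  have hsplit : (∫ t in Set.Icc (-Real.pi) Real.pi, ‖F t‖ * Real.exp (y * t))
      = (∫ t in S', ‖F t‖ * Real.exp (y * t)) + ∫ t in T, ‖F t‖ * Real.exp (y * t) := by
    rw [show Set.Icc (-Real.pi) Real.pi = S' ∪ T from (Set.union_diff_cancel hS'sub).symm]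
    exact setIntegral_union Set.disjoint_sdiff_right
      (measurableSet_Icc.diff measurableSet_Icc)
      ((hprod y).mono_set hS'sub) ((hprod y).mono_set Set.diff_subset)
  have hmid : (∫ t in S', ‖F t‖ * Real.exp (y * t))
      ≤ Real.exp ((Real.pi - δ) * u) * Cφ := by
    calc (∫ t in S', ‖F t‖ * Real.exp (y * t))
        ≤ ∫ t in S', ‖F t‖ * Real.exp ((Real.pi - δ) * u) := by
          apply setIntegral_mono_on ((hprod y).mono_set hS'sub)
            ((hφint.mono_set hS'sub).mul_const _) measurableSet_Icc
          intro t ht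
          apply mul_le_mul_of_nonneg_left _ (norm_nonneg _)
          apply Real.exp_le_exp.2
          have h3 : |t| ≤ Real.pi - δ := abs_le.2 ⟨ht.1, ht.2⟩
          calc y * t ≤ |y * t| := le_abs_self _
          _ = |y| * |t| := abs_mul _ _
          _ ≤ |y| * (Real.pi - δ) := by gcongr
          _ = (Real.pi - δ) * u := by rw [hy]; ring
    _ = Real.exp ((Real.pi - δ) * u) * ∫ t in S', ‖F t‖ := by
          rw [integral_mul_const]; ring
    _ ≤ Real.exp ((Real.pi - δ) * u) * Cφ := by
          gcongr
          exact setIntegral_mono_set hφint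
            (Filter.Eventually.of_forall fun t => norm_nonneg _)
            (HasSubset.Subset.eventuallyLE hS'sub)
  have htail : (∫ t in T, ‖F t‖ * Real.exp (y * t))
      ≤ Real.sqrt (2 * Real.pi * (ε / 2) ^ 2)
        * Real.sqrt (2 * Real.pi * pwKernelDiag y) := by
    have hTm : MeasurableSet T := measurableSet_Icc.diff measurableSet_Icc
    refine (holder_tail hF hTm Set.diff_subset y).trans ?_
    have hexpsq : IntegrableOn (fun t => Real.exp (y * t) ^ 2)
        (Set.Icc (-Real.pi) Real.pi) volume := by
      have hc : Continuous fun t : ℝ => Real.exp (y * t) ^ 2 := by continuity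
      exact hc.integrableOn_Icc
    apply mul_le_mul
    · exact Real.sqrt_le_sqrt hδtail.le
    · apply Real.sqrt_le_sqrt
      calc (∫ t in T, Real.exp (y * t) ^ 2)
          ≤ ∫ t in Set.Icc (-Real.pi) Real.pi, Real.exp (y * t) ^ 2 :=
            setIntegral_mono_set hexpsq
              (Filter.Eventually.of_forall fun t => sq_nonneg _)
              (HasSubset.Subset.eventuallyLE Set.diff_subset)
      _ = ∫ t in Set.Icc (-Real.pi) Real.pi, Real.exp (2 * y * t) := by
            apply integral_congr_ae
            filter_upwards with t
            rw [sq, ← Real.exp_add]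
            ring_nf
      _ = 2 * Real.pi * pwKernelDiag y := pwK_integral y
    · exact Real.sqrt_nonneg _
    · exact Real.sqrt_nonneg _
  have hval : g y / Real.sqrt (pwKernelDiag y)
      = (1 / (2 * Real.pi)) * (∫ t in S', ‖F t‖ * Real.exp (y * t))
          / Real.sqrt (pwKernelDiag y)
        + (1 / (2 * Real.pi)) * (∫ t in T, ‖F t‖ * Real.exp (y * t))
          / Real.sqrt (pwKernelDiag y) := by
    simp only [hg]
    rw [hsplit]
    ring
  rw [hval]
  have hb1 : (1 / (2 * Real.pi)) * (∫ t in S', ‖F t‖ * Real.exp (y * t))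
      / Real.sqrt (pwKernelDiag y) < ε / 2 := by
    have step : (1 / (2 * Real.pi)) * (∫ t in S', ‖F t‖ * Real.exp (y * t))
        / Real.sqrt (pwKernelDiag y)
        ≤ (1 / (2 * Real.pi)) * (Real.exp ((Real.pi - δ) * u) * Cφ)
          / Real.sqrt (pwKernelDiag y) :=
      div_le_div_of_nonneg_right (mul_le_mul_of_nonneg_left hmid (by positivity)) hsK.le
    refine step.trans_lt ?_
    calc (1 / (2 * Real.pi)) * (Real.exp ((Real.pi - δ) * u) * Cφ)
          / Real.sqrt (pwKernelDiag y)
        = Cφ / (2 * Real.pi) * (Real.exp ((Real.pi - δ) * u) / Real.sqrt (pwKernelDiag u)) := by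
          rw [hKu]; ring
    _ < ε / 2 := hu
  have hb2 : (1 / (2 * Real.pi)) * (∫ t in T, ‖F t‖ * Real.exp (y * t))
      / Real.sqrt (pwKernelDiag y) ≤ ε / 2 := by
    have step : (1 / (2 * Real.pi)) * (∫ t in T, ‖F t‖ * Real.exp (y * t))
        / Real.sqrt (pwKernelDiag y)
        ≤ (1 / (2 * Real.pi)) * (Real.sqrt (2 * Real.pi * (ε / 2) ^ 2)
            * Real.sqrt (2 * Real.pi * pwKernelDiag y)) / Real.sqrt (pwKernelDiag y) :=
      div_le_div_of_nonneg_right (mul_le_mul_of_nonneg_left htail (by positivity)) hsK.le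
    refine step.trans_eq ?_
    have h2π : Real.sqrt (2 * Real.pi) * Real.sqrt (2 * Real.pi) = 2 * Real.pi :=
      Real.mul_self_sqrt (by positivity)
    rw [Real.sqrt_mul (by positivity : (0:ℝ) ≤ 2 * Real.pi),
      Real.sqrt_mul (by positivity : (0:ℝ) ≤ 2 * Real.pi),
      Real.sqrt_sq (by positivity : (0:ℝ) ≤ ε / 2)]
    rw [div_eq_iff hsK.ne']
    rw [show (1 / (2 * Real.pi)) * (Real.sqrt (2 * Real.pi) * (ε / 2)
        * (Real.sqrt (2 * Real.pi) * Real.sqrt (pwKernelDiag y)))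
      = (Real.sqrt (2 * Real.pi) * Real.sqrt (2 * Real.pi)) * (1 / (2 * Real.pi))
        * (ε / 2) * Real.sqrt (pwKernelDiag y) by ring, h2π]
    field_simp
  calc (1 / (2 * Real.pi)) * (∫ t in S', ‖F t‖ * Real.exp (y * t))
          / Real.sqrt (pwKernelDiag y)
        + (1 / (2 * Real.pi)) * (∫ t in T, ‖F t‖ * Real.exp (y * t))
          / Real.sqrt (pwKernelDiag y)
      < ε / 2 + ε / 2 := add_lt_add_of_lt_of_le hb1 hb2
  _ = ε := by ring
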